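/- arXiv:1511.08947 — 5 statements merged into one kernel-verified Lean document; each statement's English description precedes it below -/
import Mathlib

section
/- Under the abstract energy setting for the Kelvin–Voigt model, the weighted energy estimate of Lemma 3.1 (eq. (3.3)) holds: for every t ≥ 0, ‖ι u(t)‖_H² + κ ‖u(t)‖_V² + β e^{−2αt} ∫₀ᵗ e^{2αs} ‖u(s)‖_V² ds ≤ e^{−2αt} (‖ι u(0)‖_H² + κ ‖u(0)‖_V²) + ((1 − e^{−2αt})/(2 ν λ₁ α)) M². -/
open scoped RealInnerProductSpace

/-- Abstract energy setting for the Kelvin–Voigt model: weighted energy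
estimate (Lemma 3.1, eq. (3.3)). -/
theorem kelvin_voigt_weighted_energy_estimate
    {H : Type*} [NormedAddCommGroup H] [InnerProductSpace ℝ H] [CompleteSpace H]
    {V : Type*} [NormedAddCommGroup V] [InnerProductSpace ℝ V]
    (ι : V →ₗ[ℝ] H)
    (lam1 : ℝ) (hlam1 : 0 < lam1)
    (hPoincare : ∀ v : V, ‖ι v‖ ^ 2 ≤ lam1⁻¹ * ‖v‖ ^ 2)
    (κ ν α M : ℝ) (hκ : 0 < κ) (hν : 0 < ν)
    (hα : 0 < α) (hα' : α < ν * lam1 / (4 * (1 + κ * lam1)))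
    (β : ℝ) (hβ : β = ν - 2 * α * (κ + lam1⁻¹))
    (u : ℝ → V) (u' : ℝ → V)
    (hu : ∀ t ≥ (0 : ℝ), HasDerivAt u (u' t) t)
    (hιu : ∀ t ≥ (0 : ℝ), HasDerivAt (fun s => ι (u s)) (ι (u' t)) t)
    (f : ℝ → H) (hf : ∀ t ≥ (0 : ℝ), ‖f t‖ ≤ M)
    (henergy : ∀ t ≥ (0 : ℝ),
      ⟪ι (u' t), ι (u t)⟫ + κ * ⟪u' t, u t⟫ + ν * ‖u t‖ ^ 2
        ≤ ⟪f t, ι (u t)⟫) :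
    ∀ t ≥ (0 : ℝ),
      ‖ι (u t)‖ ^ 2 + κ * ‖u t‖ ^ 2
          + β * Real.exp (-2 * α * t)
              * ∫ s in (0 : ℝ)..t, Real.exp (2 * α * s) * ‖u s‖ ^ 2
        ≤ Real.exp (-2 * α * t) * (‖ι (u 0)‖ ^ 2 + κ * ‖u 0‖ ^ 2)
          + ((1 - Real.exp (-2 * α * t)) / (2 * ν * lam1 * α)) * M ^ 2 := by
  intro t ht
  have hnl : (0:ℝ) < ν * lam1 := mul_pos hν hlam1
  -- the weighted integrand, using `max s 0` to get global continuity
  set g : ℝ → ℝ := fun s =>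
    Real.exp (2 * α * s) * (β * ‖u (max s 0)‖ ^ 2 - M ^ 2 / (ν * lam1)) with hg
  -- the weighted energy functional
  set F : ℝ → ℝ := fun s =>
    Real.exp (2 * α * s) * (‖ι (u s)‖ ^ 2 + κ * ‖u s‖ ^ 2) + ∫ r in (0:ℝ)..s, g r with hF
  -- continuity of g
  have hwc : Continuous (fun s : ℝ => u (max s 0)) := by
    rw [continuous_iff_continuousAt]
    intro s
    have h1 : ContinuousAt (fun s : ℝ => max s 0) s :=
      (continuous_id.max continuous_const).continuousAt
    exact ContinuousAt.comp (x := s) (g := u) (f := fun s : ℝ => max s 0)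
      (hu (max s 0) (le_max_right _ _)).continuousAt h1
  have hexpc : Continuous (fun s : ℝ => Real.exp (2 * α * s)) := by fun_prop
  have hgcont : Continuous g := by
    exact hexpc.mul ((continuous_const.mul ((hwc.norm).pow 2)).sub continuous_const)
  -- derivative of the exponential factor
  have hexp : ∀ s : ℝ, HasDerivAt (fun r => Real.exp (2 * α * r))
      (2 * α * Real.exp (2 * α * s)) s := by
    intro s
    have h := ((hasDerivAt_id s).const_mul (2 * α)).exp
    simpa [mul_comm] using h
  -- derivative of the energy
  have hE : ∀ s ∈ Set.Ici (0:ℝ),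
      HasDerivAt (fun r => ‖ι (u r)‖ ^ 2 + κ * ‖u r‖ ^ 2)
        (2 * ⟪ι (u' s), ι (u s)⟫ + 2 * κ * ⟪u' s, u s⟫) s := by
    intro s hs
    have h1 := (hιu s hs).inner (𝕜 := ℝ) (hιu s hs)
    have h2 := (hu s hs).inner (𝕜 := ℝ) (hu s hs)
    have h3 := h1.add (h2.const_mul κ)
    simp only [real_inner_self_eq_norm_sq] at h3
    refine HasDerivAt.congr_deriv h3 ?_
    rw [real_inner_comm (ι (u s)) (ι (u' s)), real_inner_comm (u s) (u' s)]
    try ring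
  -- derivative of F
  have hFd : ∀ s ∈ Set.Ici (0:ℝ), HasDerivAt F
      (2 * α * Real.exp (2 * α * s) * (‖ι (u s)‖ ^ 2 + κ * ‖u s‖ ^ 2)
        + Real.exp (2 * α * s) * (2 * ⟪ι (u' s), ι (u s)⟫ + 2 * κ * ⟪u' s, u s⟫)
        + g s) s := by
    intro s hs
    have h1 := (hexp s).mul (hE s hs)
    have h2 := (hgcont.integral_hasStrictDerivAt 0 s).hasDerivAt
    have h3 := h1.add h2
    exact h3
  -- the key pointwise inequality
  have hkey : ∀ s ≥ (0:ℝ),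
      2 * α * (‖ι (u s)‖ ^ 2 + κ * ‖u s‖ ^ 2)
        + (2 * ⟪ι (u' s), ι (u s)⟫ + 2 * κ * ⟪u' s, u s⟫)
        + (β * ‖u s‖ ^ 2 - M ^ 2 / (ν * lam1)) ≤ 0 := by
    intro s hs
    have h1 := henergy s hs
    have h2 : ⟪f s, ι (u s)⟫ ≤ ‖f s‖ * ‖ι (u s)‖ := real_inner_le_norm _ _
    have h3 : ‖f s‖ * ‖ι (u s)‖
        ≤ ν * lam1 / 2 * ‖ι (u s)‖ ^ 2 + ‖f s‖ ^ 2 / (2 * (ν * lam1)) := by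
      rw [← sub_nonneg]
      have heq : ν * lam1 / 2 * ‖ι (u s)‖ ^ 2 + ‖f s‖ ^ 2 / (2 * (ν * lam1))
          - ‖f s‖ * ‖ι (u s)‖
          = (ν * lam1 * ‖ι (u s)‖ - ‖f s‖) ^ 2 / (2 * (ν * lam1)) := by
        field_simp
        ring
      rw [heq]
      positivity
    have h5 : ‖f s‖ ^ 2 ≤ M ^ 2 := by
      have := hf s hs
      nlinarith [norm_nonneg (f s)]
    have h5' : ‖f s‖ ^ 2 / (2 * (ν * lam1)) ≤ M ^ 2 / (2 * (ν * lam1)) := by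
      gcongr
    have h6 : ν * lam1 / 2 * ‖ι (u s)‖ ^ 2 ≤ ν / 2 * ‖u s‖ ^ 2 := by
      have h := mul_le_mul_of_nonneg_left (hPoincare (u s)) (by positivity :
        (0:ℝ) ≤ ν * lam1 / 2)
      calc ν * lam1 / 2 * ‖ι (u s)‖ ^ 2
          ≤ ν * lam1 / 2 * (lam1⁻¹ * ‖u s‖ ^ 2) := h
        _ = ν / 2 * ‖u s‖ ^ 2 := by field_simp
    have h7 : 2 * α * ‖ι (u s)‖ ^ 2 ≤ 2 * α * lam1⁻¹ * ‖u s‖ ^ 2 := by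
      have h := mul_le_mul_of_nonneg_left (hPoincare (u s)) (by positivity :
        (0:ℝ) ≤ 2 * α)
      calc 2 * α * ‖ι (u s)‖ ^ 2 ≤ 2 * α * (lam1⁻¹ * ‖u s‖ ^ 2) := h
        _ = 2 * α * lam1⁻¹ * ‖u s‖ ^ 2 := by ring
    have hb : β * ‖u s‖ ^ 2
        = ν * ‖u s‖ ^ 2 - 2 * α * κ * ‖u s‖ ^ 2 - 2 * α * lam1⁻¹ * ‖u s‖ ^ 2 := by
      rw [hβ]; ring
    have h8 : M ^ 2 / (2 * (ν * lam1)) + M ^ 2 / (2 * (ν * lam1)) = M ^ 2 / (ν * lam1) := by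
      ring
    linarith
  -- F is antitone on [0, ∞)
  have hFcont : ContinuousOn F (Set.Ici (0:ℝ)) := fun s hs =>
    (hFd s hs).continuousAt.continuousWithinAt
  have hFdiff : DifferentiableOn ℝ F (interior (Set.Ici (0:ℝ))) := by
    rw [interior_Ici]
    exact fun s hs => (hFd s (Set.mem_Ici.mpr (le_of_lt hs))).differentiableAt.differentiableWithinAt
  have hFderiv_nonpos : ∀ s ∈ interior (Set.Ici (0:ℝ)), deriv F s ≤ 0 := by
    rw [interior_Ici]
    intro s hs
    rw [(hFd s (Set.mem_Ici.mpr (le_of_lt hs))).deriv]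
    have hmax : max s 0 = s := max_eq_left (le_of_lt hs)
    have hk := hkey s (le_of_lt hs)
    have hexp_pos := (Real.exp_pos (2 * α * s)).le
    have heq : 2 * α * Real.exp (2 * α * s) * (‖ι (u s)‖ ^ 2 + κ * ‖u s‖ ^ 2)
        + Real.exp (2 * α * s) * (2 * ⟪ι (u' s), ι (u s)⟫ + 2 * κ * ⟪u' s, u s⟫)
        + g s
        = Real.exp (2 * α * s) *
          (2 * α * (‖ι (u s)‖ ^ 2 + κ * ‖u s‖ ^ 2)
            + (2 * ⟪ι (u' s), ι (u s)⟫ + 2 * κ * ⟪u' s, u s⟫)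
            + (β * ‖u s‖ ^ 2 - M ^ 2 / (ν * lam1))) := by
      simp only [hg, hmax]; ring
    rw [heq]
    have := mul_le_mul_of_nonneg_left hk hexp_pos
    simpa using this
  have hanti : AntitoneOn F (Set.Ici (0:ℝ)) :=
    antitoneOn_of_deriv_nonpos (convex_Ici 0) hFcont hFdiff hFderiv_nonpos
  have hFt : F t ≤ F 0 := hanti (Set.mem_Ici.mpr le_rfl) ht ht
  have hF0 : F 0 = ‖ι (u 0)‖ ^ 2 + κ * ‖u 0‖ ^ 2 := by
    simp [hF]
  -- compute the integral of g on [0, t]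
  have hExpInt : (∫ s in (0:ℝ)..t, Real.exp (2 * α * s))
      = (Real.exp (2 * α * t) - 1) / (2 * α) := by
    have hd : ∀ s ∈ Set.uIcc (0:ℝ) t,
        HasDerivAt (fun r => Real.exp (2 * α * r) / (2 * α)) (Real.exp (2 * α * s)) s := by
      intro s _
      have h := (hexp s).div_const (2 * α)
      refine h.congr_deriv ?_
      field_simp
    rw [intervalIntegral.integral_eq_sub_of_hasDerivAt hd
      (hexpc.intervalIntegrable 0 t)]
    simp
    ring
  have hucont : ContinuousOn (fun s => Real.exp (2 * α * s) * ‖u s‖ ^ 2) (Set.uIcc (0:ℝ) t) := by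
    intro s hs
    rw [Set.uIcc_of_le ht] at hs
    exact ((hexpc.continuousAt).mul
      (((hu s hs.1).continuousAt.norm).pow 2)).continuousWithinAt
  have hg_eq : (∫ r in (0:ℝ)..t, g r)
      = β * (∫ s in (0:ℝ)..t, Real.exp (2 * α * s) * ‖u s‖ ^ 2)
        - (M ^ 2 / (ν * lam1)) * ((Real.exp (2 * α * t) - 1) / (2 * α)) := by
    have hcongr : Set.EqOn g
        (fun s => β * (Real.exp (2 * α * s) * ‖u s‖ ^ 2)
          - (M ^ 2 / (ν * lam1)) * Real.exp (2 * α * s)) (Set.uIcc (0:ℝ) t) := by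
      intro s hs
      rw [Set.uIcc_of_le ht] at hs
      simp only [hg, max_eq_left hs.1]
      ring
    rw [intervalIntegral.integral_congr hcongr,
      intervalIntegral.integral_sub
        ((hucont.intervalIntegrable).const_mul β)
        (((hexpc.intervalIntegrable 0 t)).const_mul _),
      intervalIntegral.integral_const_mul, intervalIntegral.integral_const_mul, hExpInt]
  -- put things together
  set I : ℝ := ∫ s in (0:ℝ)..t, Real.exp (2 * α * s) * ‖u s‖ ^ 2 with hI
  have hMain : Real.exp (2 * α * t) * (‖ι (u t)‖ ^ 2 + κ * ‖u t‖ ^ 2)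
      + (β * I - (M ^ 2 / (ν * lam1)) * ((Real.exp (2 * α * t) - 1) / (2 * α)))
      ≤ ‖ι (u 0)‖ ^ 2 + κ * ‖u 0‖ ^ 2 := by
    have := hFt
    rw [hF0] at this
    simpa [hF, hg_eq] using this
  have hp : (0:ℝ) < Real.exp (2 * α * t) := Real.exp_pos _
  have hq : Real.exp (-2 * α * t) = (Real.exp (2 * α * t))⁻¹ := by
    rw [show (-2 * α * t) = -(2 * α * t) by ring, Real.exp_neg]
  rw [hq]
  set p : ℝ := Real.exp (2 * α * t) with hpd
  have h2 : ((1 - p⁻¹) / (2 * ν * lam1 * α)) * M ^ 2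
      = p⁻¹ * ((M ^ 2 / (ν * lam1)) * ((p - 1) / (2 * α))) := by
    field_simp
  calc ‖ι (u t)‖ ^ 2 + κ * ‖u t‖ ^ 2 + β * p⁻¹ * I
      = p⁻¹ * (p * (‖ι (u t)‖ ^ 2 + κ * ‖u t‖ ^ 2)
          + (β * I - (M ^ 2 / (ν * lam1)) * ((p - 1) / (2 * α))))
        + p⁻¹ * ((M ^ 2 / (ν * lam1)) * ((p - 1) / (2 * α))) := by
        field_simp
        ring
    _ ≤ p⁻¹ * (‖ι (u 0)‖ ^ 2 + κ * ‖u 0‖ ^ 2)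
        + p⁻¹ * ((M ^ 2 / (ν * lam1)) * ((p - 1) / (2 * α))) :=
        add_le_add_left (mul_le_mul_of_nonneg_left hMain (inv_nonneg.mpr hp.le)) _
    _ = p⁻¹ * (‖ι (u 0)‖ ^ 2 + κ * ‖u 0‖ ^ 2)
        + ((1 - p⁻¹) / (2 * ν * lam1 * α)) * M ^ 2 := by rw [h2]
end

section
/- Under the abstract energy setting for the Kelvin–Voigt model, the asymptotic bound (eq. (3.13)) of Lemma 3.1 holds: limsup_{t→∞} ( ‖ι u(t)‖_H² + κ ‖u(t)‖_V² ) ≤ M² / (2 ν λ₁ α). -/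
open scoped RealInnerProductSpace
open Filter Real

set_option maxHeartbeats 1000000

/-- Abstract energy setting for the Kelvin–Voigt model: asymptotic bound
(Lemma 3.1, eq. (3.13)). -/
theorem kelvin_voigt_energy_limsup
    {H : Type*} [NormedAddCommGroup H] [InnerProductSpace ℝ H] [CompleteSpace H]
    {V : Type*} [NormedAddCommGroup V] [InnerProductSpace ℝ V]
    (ι : V →ₗ[ℝ] H)
    (lam1 : ℝ) (hlam1 : 0 < lam1)
    (hPoincare : ∀ v : V, ‖ι v‖ ^ 2 ≤ lam1⁻¹ * ‖v‖ ^ 2)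
    (κ ν α M : ℝ) (hκ : 0 < κ) (hν : 0 < ν)
    (hα : 0 < α) (hα' : α < ν * lam1 / (4 * (1 + κ * lam1)))
    (β : ℝ) (hβ : β = ν - 2 * α * (κ + lam1⁻¹))
    (u : ℝ → V) (u' : ℝ → V)
    (hu : ∀ t ≥ (0 : ℝ), HasDerivAt u (u' t) t)
    (hιu : ∀ t ≥ (0 : ℝ), HasDerivAt (fun s => ι (u s)) (ι (u' t)) t)
    (f : ℝ → H) (hf : ∀ t ≥ (0 : ℝ), ‖f t‖ ≤ M)
    (henergy : ∀ t ≥ (0 : ℝ),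
      ⟪ι (u' t), ι (u t)⟫ + κ * ⟪u' t, u t⟫ + ν * ‖u t‖ ^ 2
        ≤ ⟪f t, ι (u t)⟫)
    :
    Filter.limsup (fun t => ‖ι (u t)‖ ^ 2 + κ * ‖u t‖ ^ 2) Filter.atTop
      ≤ M ^ 2 / (2 * ν * lam1 * α) := by
  set E : ℝ → ℝ := fun t => ‖ι (u t)‖ ^ 2 + κ * ‖u t‖ ^ 2 with hEdef
  set C : ℝ := M ^ 2 / (ν * lam1) with hCdef
  set Dv : ℝ → ℝ := fun t => 2 * ⟪ι (u' t), ι (u t)⟫ + κ * (2 * ⟪u' t, u t⟫) with hDdef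
  have hc : (0:ℝ) < ν * lam1 := mul_pos hν hlam1
  have h2α : (0:ℝ) < 2 * α := by linarith
  -- derivative of E
  have hE : ∀ t ≥ (0:ℝ), HasDerivAt E (Dv t) t := by
    intro t ht
    have h1 : HasDerivAt (fun s => ‖ι (u s)‖ ^ 2) (2 * ⟪ι (u' t), ι (u t)⟫) t := by
      have := (hιu t ht).inner ℝ (hιu t ht)
      simp only [real_inner_self_eq_norm_sq] at this
      have e : 2 * ⟪ι (u' t), ι (u t)⟫ = ⟪ι (u t), ι (u' t)⟫ + ⟪ι (u' t), ι (u t)⟫ := by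
        rw [real_inner_comm]; ring
      rw [e]; exact this
    have h2 : HasDerivAt (fun s => κ * ‖u s‖ ^ 2) (κ * (2 * ⟪u' t, u t⟫)) t := by
      have := ((hu t ht).inner ℝ (hu t ht)).const_mul κ
      simp only [real_inner_self_eq_norm_sq] at this
      have e : κ * (2 * ⟪u' t, u t⟫) = κ * (⟪u t, u' t⟫ + ⟪u' t, u t⟫) := by
        rw [real_inner_comm]; ring
      rw [e]; exact this
    exact h1.add h2
  -- key differential inequality
  have hαν : 2 * α * (κ + lam1⁻¹) ≤ ν := by
    have h4 : (0:ℝ) < 4 * (1 + κ * lam1) := by positivity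
    rw [lt_div_iff₀ h4] at hα'
    have hinv : lam1 * lam1⁻¹ = 1 := mul_inv_cancel₀ hlam1.ne'
    nlinarith [mul_pos hα (mul_pos hκ hlam1)]
  have hkey : ∀ t ≥ (0:ℝ), Dv t ≤ -(2 * α) * E t + C := by
    intro t ht
    have he := henergy t ht
    have hp := hPoincare (u t)
    have hFM := hf t ht
    have hF0 : (0:ℝ) ≤ ‖f t‖ := norm_nonneg _
    have hib := real_inner_le_norm (f t) (ι (u t))
    have hinvC : (ν * lam1) * C = M ^ 2 := mul_div_cancel₀ _ hc.ne'
    have hinv : lam1 * lam1⁻¹ = 1 := mul_inv_cancel₀ hlam1.ne'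
    have hsq : 2 * ⟪f t, ι (u t)⟫ ≤ ν * lam1 * ‖ι (u t)‖ ^ 2 + C := by
      nlinarith [sq_nonneg (ν * lam1 * ‖ι (u t)‖ - ‖f t‖), norm_nonneg (ι (u t)),
        mul_le_mul hFM hFM hF0 (le_trans hF0 hFM)]
    have e1 : ν * lam1 * (lam1⁻¹ * ‖u t‖ ^ 2) = ν * ‖u t‖ ^ 2 := by
      field_simp
    have hP1 : ν * lam1 * ‖ι (u t)‖ ^ 2 ≤ ν * ‖u t‖ ^ 2 :=
      le_trans (mul_le_mul_of_nonneg_left hp hc.le) (le_of_eq e1)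
    have hP2 : 2 * α * ‖ι (u t)‖ ^ 2 ≤ 2 * α * (lam1⁻¹ * ‖u t‖ ^ 2) :=
      mul_le_mul_of_nonneg_left hp h2α.le
    have hP3 : 2 * α * (κ + lam1⁻¹) * ‖u t‖ ^ 2 ≤ ν * ‖u t‖ ^ 2 :=
      mul_le_mul_of_nonneg_right hαν (sq_nonneg _)
    simp only [hDdef, hEdef]
    nlinarith [hP1, hP2, hP3, he, hsq]
  -- the auxiliary function ψ and its monotonicity
  set ψ : ℝ → ℝ := fun t => C / (2 * α) * Real.exp (2 * α * t) - E t * Real.exp (2 * α * t)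
    with hψdef
  have hexp : ∀ t : ℝ, HasDerivAt (fun s => Real.exp (2 * α * s)) (2 * α * Real.exp (2 * α * t)) t := by
    intro t
    have h := ((hasDerivAt_id t).const_mul (2 * α)).exp
    simpa [mul_comm] using h
  have hψ : ∀ t ≥ (0:ℝ), HasDerivAt ψ
      (C / (2 * α) * (2 * α * Real.exp (2 * α * t))
        - (Dv t * Real.exp (2 * α * t) + E t * (2 * α * Real.exp (2 * α * t)))) t := by
    intro t ht
    exact ((hexp t).const_mul (C / (2 * α))).sub ((hE t ht).mul (hexp t))
  have hψ'0 : ∀ t ≥ (0:ℝ), 0 ≤ C / (2 * α) * (2 * α * Real.exp (2 * α * t))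
        - (Dv t * Real.exp (2 * α * t) + E t * (2 * α * Real.exp (2 * α * t))) := by
    intro t ht
    have h1 := hkey t ht
    have h2 : C / (2 * α) * (2 * α) = C := div_mul_cancel₀ _ h2α.ne'
    have h3 := Real.exp_pos (2 * α * t)
    have h4 : C / (2 * α) * (2 * α * Real.exp (2 * α * t)) = C * Real.exp (2 * α * t) := by
      rw [← mul_assoc, h2]
    rw [h4]
    nlinarith [mul_le_mul_of_nonneg_right h1 h3.le]
  have hmono : MonotoneOn ψ (Set.Ici (0:ℝ)) := by
    apply monotoneOn_of_deriv_nonneg (convex_Ici 0)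
    · exact fun t ht => ((hψ t ht).continuousAt).continuousWithinAt
    · intro x hx
      rw [interior_Ici] at hx
      exact ((hψ x (le_of_lt hx)).differentiableAt).differentiableWithinAt
    · intro x hx
      rw [interior_Ici] at hx
      rw [(hψ x (le_of_lt hx)).deriv]
      exact hψ'0 x (le_of_lt hx)
  have hC0 : 0 ≤ C / (2 * α) := by positivity
  -- pointwise bound
  have hbound : ∀ t ≥ (0:ℝ), E t ≤ C / (2 * α) + E 0 * Real.exp (-(2 * α * t)) := by
    intro t ht
    have h := hmono (Set.mem_Ici.mpr le_rfl) (Set.mem_Ici.mpr ht) ht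
    have hp0 : (0:ℝ) < Real.exp (2 * α * t) := Real.exp_pos _
    have hψ0 : ψ 0 = C / (2 * α) - E 0 := by simp [hψdef]
    rw [hψ0, hψdef] at h
    rw [Real.exp_neg]
    have hinv : Real.exp (2 * α * t) * (Real.exp (2 * α * t))⁻¹ = 1 :=
      mul_inv_cancel₀ hp0.ne'
    have hmul : E t * Real.exp (2 * α * t)
        ≤ C / (2 * α) * Real.exp (2 * α * t) + E 0 := by nlinarith
    calc E t = E t * Real.exp (2 * α * t) * (Real.exp (2 * α * t))⁻¹ := by
          rw [mul_assoc, hinv, mul_one]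
      _ ≤ (C / (2 * α) * Real.exp (2 * α * t) + E 0) * (Real.exp (2 * α * t))⁻¹ := by
          exact mul_le_mul_of_nonneg_right hmul (by positivity)
      _ = C / (2 * α) + E 0 * (Real.exp (2 * α * t))⁻¹ := by
          field_simp
  -- limit of the bounding function
  have htend : Tendsto (fun t => C / (2 * α) + E 0 * Real.exp (-(2 * α * t))) atTop
      (nhds (C / (2 * α))) := by
    have h1 : Tendsto (fun t : ℝ => 2 * α * t) atTop atTop :=
      Tendsto.const_mul_atTop h2α tendsto_id
    have h2 : Tendsto (fun t : ℝ => Real.exp (-(2 * α * t))) atTop (nhds 0) :=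
      Real.tendsto_exp_neg_atTop_nhds_zero.comp h1
    have h3 : Tendsto (fun t : ℝ => C / (2 * α) + E 0 * Real.exp (-(2 * α * t))) atTop
        (nhds (C / (2 * α) + E 0 * 0)) :=
      tendsto_const_nhds.add (h2.const_mul (E 0))
    simpa using h3
  -- wrap up
  have hEnonneg : ∀ t : ℝ, 0 ≤ E t := by
    intro t; simp only [hEdef]; positivity
  have hle : (fun t => ‖ι (u t)‖ ^ 2 + κ * ‖u t‖ ^ 2)
      ≤ᶠ[atTop] fun t => C / (2 * α) + E 0 * Real.exp (-(2 * α * t)) := by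
    filter_upwards [eventually_ge_atTop (0:ℝ)] with t ht
    exact hbound t ht
  have hlimsup := Filter.limsup_le_limsup hle
    (isCoboundedUnder_le_of_eventually_le atTop (Eventually.of_forall hEnonneg))
    htend.isBoundedUnder_le
  rw [htend.limsup_eq] at hlimsup
  calc Filter.limsup (fun t => ‖ι (u t)‖ ^ 2 + κ * ‖u t‖ ^ 2) Filter.atTop
      ≤ C / (2 * α) := hlimsup
    _ = M ^ 2 / (2 * ν * lam1 * α) := by
        rw [hCdef, div_div]; ring_nf
end

section
/- Under the abstract energy setting for the Kelvin–Voigt model, the rigorous form of the gradient asymptotics of Lemma 3.1 (eq. (3.4)) holds: liminf_{t→∞} ‖u(t)‖_V² ≤ M² / (β ν λ₁); in particular, since β ≥ ν/2, liminf_{t→∞} ‖u(t)‖_V² ≤ 2 M² / (λ₁ ν²). -/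
open scoped RealInnerProductSpace

/-- Abstract energy setting for the Kelvin–Voigt model: rigorous gradient
asymptotics (Lemma 3.1, eq. (3.4)). -/
theorem kelvin_voigt_gradient_liminf
    {H : Type*} [NormedAddCommGroup H] [InnerProductSpace ℝ H] [CompleteSpace H]
    {V : Type*} [NormedAddCommGroup V] [InnerProductSpace ℝ V]
    (ι : V →ₗ[ℝ] H)
    (lam1 : ℝ) (hlam1 : 0 < lam1)
    (hPoincare : ∀ v : V, ‖ι v‖ ^ 2 ≤ lam1⁻¹ * ‖v‖ ^ 2)
    (κ ν α M : ℝ) (hκ : 0 < κ) (hν : 0 < ν)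
    (hα : 0 < α) (hα' : α < ν * lam1 / (4 * (1 + κ * lam1)))
    (β : ℝ) (hβ : β = ν - 2 * α * (κ + lam1⁻¹))
    (u : ℝ → V) (u' : ℝ → V)
    (hu : ∀ t ≥ (0 : ℝ), HasDerivAt u (u' t) t)
    (hιu : ∀ t ≥ (0 : ℝ), HasDerivAt (fun s => ι (u s)) (ι (u' t)) t)
    (f : ℝ → H) (hf : ∀ t ≥ (0 : ℝ), ‖f t‖ ≤ M)
    (henergy : ∀ t ≥ (0 : ℝ),
      ⟪ι (u' t), ι (u t)⟫ + κ * ⟪u' t, u t⟫ + ν * ‖u t‖ ^ 2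
        ≤ ⟪f t, ι (u t)⟫)
    :
    Filter.liminf (fun t => ‖u t‖ ^ 2) Filter.atTop ≤ M ^ 2 / (β * ν * lam1)
      ∧ Filter.liminf (fun t => ‖u t‖ ^ 2) Filter.atTop
          ≤ 2 * M ^ 2 / (lam1 * ν ^ 2) := by
  have hM : 0 ≤ M := le_trans (norm_nonneg (f 0)) (hf 0 le_rfl)
  have hlaminv : lam1⁻¹ * lam1 = 1 := inv_mul_cancel₀ hlam1.ne'
  set C : ℝ := M ^ 2 / (ν ^ 2 * lam1) with hC
  have hbdd : Filter.IsBoundedUnder (· ≥ ·) Filter.atTop (fun t => ‖u t‖ ^ 2) :=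
    Filter.isBoundedUnder_of ⟨0, fun t => sq_nonneg _⟩
  set E : ℝ → ℝ := fun t => ‖(ι (u t) : H)‖ ^ 2 + κ * ‖u t‖ ^ 2 with hE
  have hEnonneg : ∀ t, 0 ≤ E t := fun t =>
    add_nonneg (sq_nonneg _) (mul_nonneg hκ.le (sq_nonneg _))
  set E' : ℝ → ℝ := fun t => 2 * ⟪ι (u' t), ι (u t)⟫ + κ * (2 * ⟪u' t, u t⟫) with hE'
  have hEderiv : ∀ t ≥ (0 : ℝ), HasDerivAt E (E' t) t := by
    intro t ht
    have h1 := (hιu t ht).inner ℝ (hιu t ht)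
    have h2 := (hu t ht).inner ℝ (hu t ht)
    have hEeq : E = fun s => ⟪ι (u s), ι (u s)⟫ + κ * ⟪u s, u s⟫ := by
      funext s; simp [hE, real_inner_self_eq_norm_sq]
    rw [hEeq]
    have := h1.add (h2.const_mul κ)
    refine this.congr_deriv ?_
    simp only [hE']
    rw [real_inner_comm (ι (u' t)) (ι (u t)), real_inner_comm (u' t) (u t)]
    ring
  have hED : ∀ t ≥ (0 : ℝ), E' t ≤ ν * (C - ‖u t‖ ^ 2) := by
    intro t ht
    have hen := henergy t ht
    have hfb : ⟪f t, ι (u t)⟫ ≤ M * ‖ι (u t)‖ :=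
      le_trans (real_inner_le_norm _ _)
        (mul_le_mul_of_nonneg_right (hf t ht) (norm_nonneg _))
    have hP := hPoincare (u t)
    have hAM : M * ‖ι (u t)‖ ≤ ν / 2 * ‖u t‖ ^ 2 + M ^ 2 / (2 * ν * lam1) := by
      have hpos : (0:ℝ) < 2 * ν * lam1 := by positivity
      rw [← mul_le_mul_iff_right₀ hpos]
      have hcancel : 2 * ν * lam1 * (M ^ 2 / (2 * ν * lam1)) = M ^ 2 :=
        mul_div_cancel₀ _ hpos.ne'
      have hP' : lam1 * ‖ι (u t)‖ ^ 2 ≤ ‖u t‖ ^ 2 := by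
        have h := mul_le_mul_of_nonneg_left hP hlam1.le
        calc lam1 * ‖ι (u t)‖ ^ 2 ≤ lam1 * (lam1⁻¹ * ‖u t‖ ^ 2) := h
          _ = ‖u t‖ ^ 2 := by field_simp
      nlinarith [hcancel, sq_nonneg (ν * lam1 * ‖ι (u t)‖ - M),
        mul_le_mul_of_nonneg_left hP' (by positivity : (0:ℝ) ≤ ν ^ 2 * lam1)]
    have hCeq : ν * C = M ^ 2 / (ν * lam1) := by
      rw [hC, mul_div_assoc', div_eq_div_iff (by positivity) (by positivity)]; ring
    have hdiv : M ^ 2 / (2 * ν * lam1) = (ν * C) / 2 := by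
      rw [hCeq]; ring
    simp only [hE']
    nlinarith [hen, hfb, hAM, hdiv]
  have key : Filter.liminf (fun t => ‖u t‖ ^ 2) Filter.atTop ≤ C := by
    refine le_of_forall_pos_le_add ?_
    intro ε hε
    have hνε : 0 < ν * ε := mul_pos hν hε
    refine Filter.liminf_le_of_frequently_le ?_ hbdd
    rw [Filter.frequently_atTop]
    intro T
    by_contra hcon
    push_neg at hcon
    set T₀ : ℝ := max T 0 with hT₀
    have hT₀0 : (0 : ℝ) ≤ T₀ := le_max_right _ _
    have hbig : ∀ t ≥ T₀, C + ε < ‖u t‖ ^ 2 := fun t ht =>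
      hcon t (le_trans (le_max_left T 0) ht)
    set g : ℝ → ℝ := fun t => E t + ν * ε * t with hg
    have hgd : ∀ t ≥ T₀, HasDerivAt g (E' t + ν * ε) t := by
      intro t ht
      have := (hEderiv t (hT₀0.trans ht)).add
        (((hasDerivAt_id t).const_mul (ν * ε)))
      rw [mul_one] at this
      exact this
    have hganti : AntitoneOn g (Set.Ici T₀) := by
      apply antitoneOn_of_hasDerivWithinAt_nonpos (convex_Ici T₀)
        (f' := fun t => E' t + ν * ε)
      · exact fun t ht => ((hgd t ht).continuousAt).continuousWithinAt
      · intro t ht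
        rw [interior_Ici] at ht
        exact ((hgd t (le_of_lt ht)).hasDerivWithinAt)
      · intro t ht
        rw [interior_Ici] at ht
        have h1 := hED t (hT₀0.trans ht.le)
        have h2 := hbig t ht.le
        nlinarith [hν]
    set t₁ : ℝ := T₀ + (E T₀ + 1) / (ν * ε) with ht₁def
    have ht₁ : T₀ ≤ t₁ :=
      le_add_of_nonneg_right (div_nonneg (by linarith [hEnonneg T₀]) hνε.le)
    have hmono := hganti (Set.mem_Ici.mpr le_rfl) (Set.mem_Ici.mpr ht₁) ht₁
    have hexp : ν * ε * (t₁ - T₀) = E T₀ + 1 := by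
      rw [ht₁def]; field_simp; ring
    have hcontr : E t₁ ≤ -1 := by
      simp only [hg] at hmono
      nlinarith [hmono, hexp]
    linarith [hEnonneg t₁, hcontr]
  have hβν : ν / 2 ≤ β ∧ β ≤ ν := by
    rw [lt_div_iff₀ (by positivity : (0:ℝ) < 4 * (1 + κ * lam1))] at hα'
    constructor
    · rw [hβ]
      have h1 : lam1⁻¹ = 1 / lam1 := by rw [one_div]
      nlinarith [mul_pos hα hlam1, hlaminv]
    · rw [hβ]
      nlinarith [mul_pos hα hκ, mul_pos hα (inv_pos.mpr hlam1)]
  have hβpos : 0 < β := lt_of_lt_of_le (by positivity) hβν.1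
  constructor
  · refine le_trans key ?_
    rw [hC]
    apply div_le_div_of_nonneg_left (by positivity) (by positivity)
    nlinarith [mul_le_mul_of_nonneg_right (mul_le_mul_of_nonneg_right hβν.2 hν.le) hlam1.le]
  · refine le_trans key ?_
    rw [hC, div_le_div_iff₀ (by positivity) (by positivity)]
    nlinarith [sq_nonneg M, mul_pos (mul_pos hν hν) hlam1]
end

section
/- Under the abstract energy setting for the Kelvin–Voigt model with a dual-norm bounded forcing (Remark 3.2, eq. (3.16)): if instead of a uniform H-norm bound on f one assumes ⟨f(t), ι u(t)⟩_H ≤ F ‖u(t)‖_V for all t ≥ 0 with a constant F ≥ 0, then for every t ≥ 0, ‖ι u(t)‖_H² + κ ‖u(t)‖_V² + β e^{−2αt} ∫₀ᵗ e^{2αs} ‖u(s)‖_V² ds ≤ e^{−2αt} (‖ι u(0)‖_H² + κ ‖u(0)‖_V²) + ((1 − e^{−2αt})/(2 ν α)) F². -/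
open scoped RealInnerProductSpace

/-- Abstract energy setting for the Kelvin–Voigt model with dual-norm bounded
forcing (Remark 3.2, eq. (3.16)). -/
theorem kelvin_voigt_weighted_energy_estimate_dual_forcing
    {H : Type*} [NormedAddCommGroup H] [InnerProductSpace ℝ H] [CompleteSpace H]
    {V : Type*} [NormedAddCommGroup V] [InnerProductSpace ℝ V]
    (ι : V →ₗ[ℝ] H)
    (lam1 : ℝ) (hlam1 : 0 < lam1)
    (hPoincare : ∀ v : V, ‖ι v‖ ^ 2 ≤ lam1⁻¹ * ‖v‖ ^ 2)
    (κ ν α : ℝ) (hκ : 0 < κ) (hν : 0 < ν)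
    (hα : 0 < α) (hα' : α < ν * lam1 / (4 * (1 + κ * lam1)))
    (β : ℝ) (hβ : β = ν - 2 * α * (κ + lam1⁻¹))
    (u : ℝ → V) (u' : ℝ → V)
    (hu : ∀ t ≥ (0 : ℝ), HasDerivAt u (u' t) t)
    (hιu : ∀ t ≥ (0 : ℝ), HasDerivAt (fun s => ι (u s)) (ι (u' t)) t)
    (f : ℝ → H) (F : ℝ) (hF : 0 ≤ F)
    (hfdual : ∀ t ≥ (0 : ℝ), ⟪f t, ι (u t)⟫ ≤ F * ‖u t‖)
    (henergy : ∀ t ≥ (0 : ℝ),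
      ⟪ι (u' t), ι (u t)⟫ + κ * ⟪u' t, u t⟫ + ν * ‖u t‖ ^ 2
        ≤ ⟪f t, ι (u t)⟫) :
    ∀ t ≥ (0 : ℝ),
      ‖ι (u t)‖ ^ 2 + κ * ‖u t‖ ^ 2
          + β * Real.exp (-2 * α * t)
              * ∫ s in (0 : ℝ)..t, Real.exp (2 * α * s) * ‖u s‖ ^ 2
        ≤ Real.exp (-2 * α * t) * (‖ι (u 0)‖ ^ 2 + κ * ‖u 0‖ ^ 2)
          + ((1 - Real.exp (-2 * α * t)) / (2 * ν * α)) * F ^ 2 := by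
  intro t ht
  set g : ℝ → ℝ := fun s => Real.exp (2 * α * s) * ‖u s‖ ^ 2 with hgdef
  set P : ℝ → ℝ := fun s => ⟪ι (u s), ι (u s)⟫ + κ * ⟪u s, u s⟫ with hPdef
  have hEP : ∀ s : ℝ, ‖ι (u s)‖ ^ 2 + κ * ‖u s‖ ^ 2 = P s := by
    intro s; simp [hPdef, real_inner_self_eq_norm_sq]
  -- continuity facts
  have hgcont : ∀ s ∈ Set.Ici (0:ℝ), ContinuousAt g s := by
    intro s hs
    exact ((Real.continuous_exp.comp (continuous_const.mul continuous_id)).continuousAt).mul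
      (((hu s hs).continuousAt.norm).pow 2)
  have hgcontOn : ContinuousOn g (Set.Icc 0 t) := by
    intro s hs
    exact (hgcont s hs.1).continuousWithinAt
  have hPcont : ∀ s ∈ Set.Ici (0:ℝ), ContinuousAt P s := by
    intro s hs
    exact (((hιu s hs).continuousAt.inner (hιu s hs).continuousAt)).add
      (continuousAt_const.mul ((hu s hs).continuousAt.inner (hu s hs).continuousAt))
  -- exp derivative
  have hexp : ∀ s : ℝ, HasDerivAt (fun s => Real.exp (2 * α * s))
      (Real.exp (2 * α * s) * (2 * α)) s := by
    intro s
    have h1 : HasDerivAt (fun s : ℝ => 2 * α * s) (2 * α) s := by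
      simpa using (hasDerivAt_id s).const_mul (2 * α)
    exact h1.exp
  -- P derivative
  have hP' : ∀ s ≥ (0:ℝ), HasDerivAt P
      (2 * ⟪ι (u' s), ι (u s)⟫ + κ * (2 * ⟪u' s, u s⟫)) s := by
    intro s hs
    have h1 := (hιu s hs).inner ℝ (hιu s hs)
    have h2 := (hu s hs).inner ℝ (hu s hs)
    have := h1.add (h2.const_mul κ)
    refine this.congr_deriv ?_
    rw [real_inner_comm (ι (u s)) (ι (u' s)), real_inner_comm (u s) (u' s)]
    ring
  -- integrability
  have hintOn : MeasureTheory.IntegrableOn g (Set.uIcc 0 t) := by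
    rw [Set.uIcc_of_le ht]
    exact hgcontOn.integrableOn_Icc
  have hiint : ∀ s ∈ Set.Icc (0:ℝ) t, IntervalIntegrable g MeasureTheory.volume 0 s := by
    intro s hs
    apply ContinuousOn.intervalIntegrable
    rw [Set.uIcc_of_le hs.1]
    exact hgcontOn.mono (Set.Icc_subset_Icc le_rfl hs.2)
  set G : ℝ → ℝ := fun s => Real.exp (2 * α * s) * P s
      + β * (∫ x in (0:ℝ)..s, g x)
      - F ^ 2 / ν * ((Real.exp (2 * α * s) - 1) / (2 * α)) with hGdef
  -- derivative of G on the interior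
  have hG' : ∀ s ∈ Set.Ioo (0:ℝ) t, HasDerivAt G
      (Real.exp (2 * α * s) * (2 * α) * P s
        + Real.exp (2 * α * s) * (2 * ⟪ι (u' s), ι (u s)⟫ + κ * (2 * ⟪u' s, u s⟫))
        + β * g s
        - F ^ 2 / ν * (Real.exp (2 * α * s) * (2 * α) / (2 * α))) s := by
    intro s hs
    have hs0 : (0:ℝ) ≤ s := le_of_lt hs.1
    have hmeas : StronglyMeasurableAtFilter g (nhds s) MeasureTheory.volume := by
      refine ContinuousAt.stronglyMeasurableAtFilter isOpen_Ioi ?_ s hs.1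
      intro x hx
      exact hgcont x (Set.mem_Ici.mpr (le_of_lt (Set.mem_Ioi.mp hx)))
    have hftc : HasDerivAt (fun r => ∫ x in (0:ℝ)..r, g x) (g s) s :=
      intervalIntegral.integral_hasDerivAt_right (hiint s ⟨hs0, le_of_lt hs.2⟩) hmeas
        (hgcont s hs0)
    exact (((hexp s).mul (hP' s hs0)).add (hftc.const_mul β)).sub
      (((((hexp s).sub_const 1).div_const (2 * α)).const_mul (F ^ 2 / ν)))
  -- the derivative is nonpositive
  have hD : ∀ s ∈ Set.Ioo (0:ℝ) t,
      Real.exp (2 * α * s) * (2 * α) * P s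
        + Real.exp (2 * α * s) * (2 * ⟪ι (u' s), ι (u s)⟫ + κ * (2 * ⟪u' s, u s⟫))
        + β * g s
        - F ^ 2 / ν * (Real.exp (2 * α * s) * (2 * α) / (2 * α)) ≤ 0 := by
    intro s hs
    have hs0 : (0:ℝ) ≤ s := le_of_lt hs.1
    have hα2 : (2 * α) ≠ 0 := by positivity
    rw [mul_div_assoc, div_self hα2, mul_one]
    have he : ⟪ι (u' s), ι (u s)⟫ + κ * ⟪u' s, u s⟫ ≤ F * ‖u s‖ - ν * ‖u s‖ ^ 2 := by
      have := henergy s hs0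
      have := hfdual s hs0
      linarith
    have hPb : P s ≤ (lam1⁻¹ + κ) * ‖u s‖ ^ 2 := by
      rw [← hEP s]
      have := hPoincare (u s)
      nlinarith
    have hyoung : 2 * (F * ‖u s‖) - ν * ‖u s‖ ^ 2 ≤ F ^ 2 / ν := by
      rw [le_div_iff₀ hν]
      nlinarith [sq_nonneg (ν * ‖u s‖ - F)]
    have hkey : 2 * α * P s + (2 * ⟪ι (u' s), ι (u s)⟫ + κ * (2 * ⟪u' s, u s⟫))
        + β * ‖u s‖ ^ 2 ≤ F ^ 2 / ν := by
      nlinarith [mul_le_mul_of_nonneg_left hPb (le_of_lt (mul_pos two_pos hα))]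
    have hepos : (0:ℝ) < Real.exp (2 * α * s) := Real.exp_pos _
    have : Real.exp (2 * α * s) * (2 * α * P s
        + (2 * ⟪ι (u' s), ι (u s)⟫ + κ * (2 * ⟪u' s, u s⟫)) + β * ‖u s‖ ^ 2 - F ^ 2 / ν) ≤ 0 :=
      mul_nonpos_of_nonneg_of_nonpos (le_of_lt hepos) (by linarith)
    simp only [hgdef]
    nlinarith [this]
  -- continuity of G on [0, t]
  have hGcont : ContinuousOn G (Set.Icc 0 t) := by
    apply ContinuousOn.sub
    · apply ContinuousOn.add
      · exact (Real.continuous_exp.comp (continuous_const.mul continuous_id)).continuousOn.mul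
          (fun s hs => (hPcont s hs.1).continuousWithinAt)
      · apply continuousOn_const.mul
        have := intervalIntegral.continuousOn_primitive_interval hintOn
        rwa [Set.uIcc_of_le ht] at this
    · exact continuousOn_const.mul
        (((Real.continuous_exp.comp (continuous_const.mul continuous_id)).sub
          continuous_const).continuousOn.div_const _)
  -- antitonicity
  have hanti : AntitoneOn G (Set.Icc 0 t) := by
    apply antitoneOn_of_deriv_nonpos (convex_Icc 0 t) hGcont
    · intro s hs
      rw [interior_Icc] at hs
      exact (hG' s hs).differentiableAt.differentiableWithinAt
    · intro s hs
      rw [interior_Icc] at hs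
      rw [(hG' s hs).deriv]
      exact hD s hs
  have hGle : G t ≤ G 0 := hanti (Set.left_mem_Icc.mpr ht) (Set.right_mem_Icc.mpr ht) ht
  have hG0 : G 0 = P 0 := by simp [hGdef]
  rw [hG0] at hGle
  -- final algebra
  rw [hEP t, hEP 0, show (-2:ℝ) * α * t = -(2 * α * t) by ring, Real.exp_neg]
  set a := Real.exp (2 * α * t) with hadef
  have ha : (0:ℝ) < a := Real.exp_pos _
  have h2 : a * (P t + β * a⁻¹ * (∫ s in (0:ℝ)..t, Real.exp (2 * α * s) * ‖u s‖ ^ 2))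
      ≤ a * (a⁻¹ * P 0 + ((1 - a⁻¹) / (2 * ν * α)) * F ^ 2) := by
    have e1 : a * (P t + β * a⁻¹ * (∫ s in (0:ℝ)..t, Real.exp (2 * α * s) * ‖u s‖ ^ 2))
        = a * P t + β * (∫ s in (0:ℝ)..t, Real.exp (2 * α * s) * ‖u s‖ ^ 2) := by
      field_simp
    have e2 : a * (a⁻¹ * P 0 + ((1 - a⁻¹) / (2 * ν * α)) * F ^ 2)
        = P 0 + F ^ 2 / ν * ((a - 1) / (2 * α)) := by
      field_simp
    rw [e1, e2]
    have : a * P t + β * (∫ x in (0:ℝ)..t, g x)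
        - F ^ 2 / ν * ((a - 1) / (2 * α)) ≤ P 0 := hGle
    simp only [hgdef] at this
    linarith
  exact le_of_mul_le_mul_left h2 ha
end

section
/- Abstract form of Lemma 5.5 (estimate for the auxiliary error ρ = V_h u − v_h): in the abstract energy setting, let ρ : [0,∞) → V be differentiable with ρ(0) = 0 and ι∘ρ differentiable with (ι∘ρ)′(t) = ι(ρ′(t)), and let θ : [0,∞) → H be continuous. Assume that for all t ≥ 0, ⟨ι ρ′(t), ι ρ(t)⟩_H + κ ⟨ρ′(t), ρ(t)⟩_V + ν ‖ρ(t)‖_V² ≤ ‖θ(t)‖_H · ‖ι ρ(t)‖_H. Then for all t ≥ 0, ‖ι ρ(t)‖_H² + κ ‖ρ(t)‖_V² + 2β e^{−2αt} ∫₀ᵗ e^{2αs} ‖ρ(s)‖_V² ds ≤ (1 / (2 α λ₁ (κ + λ₁⁻¹))) · e^{−2αt} ∫₀ᵗ e^{2αs} ‖θ(s)‖_H² ds. -/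
open scoped RealInnerProductSpace

set_option maxHeartbeats 1000000

/-- Arithmetic core of Lemma 5.5. -/
lemma kv_aux (lam1 κ ν α a b r X : ℝ) (hlam1 : 0 < lam1) (hκ : 0 < κ) (hα : 0 < α)
    (h1 : X + ν * r ^ 2 ≤ a * b) (h2 : b ^ 2 ≤ lam1⁻¹ * r ^ 2) :
    2 * X + 2 * α * (b ^ 2 + κ * r ^ 2) + 2 * (ν - 2 * α * (κ + lam1⁻¹)) * r ^ 2
      ≤ (1 / (2 * α * (κ * lam1 + 1))) * a ^ 2 := by
  set L := lam1⁻¹ with hLdef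
  have hL : 0 < L := by positivity
  have hLl : lam1 * L = 1 := mul_inv_cancel₀ hlam1.ne'
  set E := 2 * α * (κ * lam1 + 1) with hEdef
  have hE : 0 < E := by positivity
  rw [div_mul_eq_mul_div, one_mul, le_div_iff₀ hE]
  have A : E * (2 * X) ≤ E * (2 * (a * b - ν * r ^ 2)) := by
    have := mul_le_mul_of_nonneg_left (by linarith : 2 * X ≤ 2 * (a * b - ν * r ^ 2)) hE.le
    linarith
  have B : E * (E + 2 * α) * b ^ 2 ≤ E * (E + 2 * α) * (L * r ^ 2) := by
    have hpos : 0 ≤ E * (E + 2 * α) := by positivity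
    exact mul_le_mul_of_nonneg_left h2 hpos
  have hkey : E * (E + 2 * α) * (L * r ^ 2) = 2 * α * E * (κ + 2 * L) * r ^ 2 := by
    rw [hEdef, hLdef]
    field_simp
    ring_nf
  have S : 2 * E * (a * b) ≤ a ^ 2 + E ^ 2 * b ^ 2 := by nlinarith [sq_nonneg (a - E * b)]
  nlinarith [A, B, S, hkey]

/-- Abstract form of Lemma 5.5 (estimate for the auxiliary error
ρ = V_h u − v_h). -/
theorem kelvin_voigt_auxiliary_error_estimate
    {H : Type*} [NormedAddCommGroup H] [InnerProductSpace ℝ H] [CompleteSpace H]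
    {V : Type*} [NormedAddCommGroup V] [InnerProductSpace ℝ V]
    (ι : V →ₗ[ℝ] H)
    (lam1 : ℝ) (hlam1 : 0 < lam1)
    (hPoincare : ∀ v : V, ‖ι v‖ ^ 2 ≤ lam1⁻¹ * ‖v‖ ^ 2)
    (κ ν α : ℝ) (hκ : 0 < κ) (hν : 0 < ν)
    (hα : 0 < α) (hα' : α < ν * lam1 / (4 * (1 + κ * lam1)))
    (β : ℝ) (hβ : β = ν - 2 * α * (κ + lam1⁻¹))
    (ρ : ℝ → V) (ρ' : ℝ → V)
    (hρ : ∀ t ≥ (0 : ℝ), HasDerivAt ρ (ρ' t) t)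
    (hρ0 : ρ 0 = 0)
    (hιρ : ∀ t ≥ (0 : ℝ), HasDerivAt (fun s => ι (ρ s)) (ι (ρ' t)) t)
    (θ : ℝ → H) (hθ : Continuous θ)
    (hineq : ∀ t ≥ (0 : ℝ),
      ⟪ι (ρ' t), ι (ρ t)⟫ + κ * ⟪ρ' t, ρ t⟫ + ν * ‖ρ t‖ ^ 2
        ≤ ‖θ t‖ * ‖ι (ρ t)‖) :
    ∀ t ≥ (0 : ℝ),
      ‖ι (ρ t)‖ ^ 2 + κ * ‖ρ t‖ ^ 2
          + 2 * β * Real.exp (-2 * α * t)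
              * ∫ s in (0 : ℝ)..t, Real.exp (2 * α * s) * ‖ρ s‖ ^ 2
        ≤ (1 / (2 * α * lam1 * (κ + lam1⁻¹)))
            * (Real.exp (-2 * α * t)
                * ∫ s in (0 : ℝ)..t, Real.exp (2 * α * s) * ‖θ s‖ ^ 2) := by
  intro t ht
  set C : ℝ := 1 / (2 * α * lam1 * (κ + lam1⁻¹)) with hCdef
  have hm : 0 < κ + lam1⁻¹ := by positivity
  have hCeq : C = 1 / (2 * α * (κ * lam1 + 1)) := by
    rw [hCdef]
    congr 1
    field_simp
  rcases eq_or_lt_of_le ht with h0 | htpos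
  · rw [← h0]
    simp [hρ0, intervalIntegral.integral_same]
  set g1 : ℝ → ℝ := fun s => Real.exp (2 * α * s) * ‖ρ s‖ ^ 2 with hg1def
  set g2 : ℝ → ℝ := fun s => Real.exp (2 * α * s) * ‖θ s‖ ^ 2 with hg2def
  have hg2c : Continuous g2 := by
    apply Continuous.mul
    · exact Real.continuous_exp.comp (continuous_const.mul continuous_id)
    · exact (hθ.norm).pow 2
  have hρca : ∀ s : ℝ, 0 ≤ s → ContinuousAt ρ s := fun s hs => (hρ s hs).continuousAt
  have hg1ca : ∀ s : ℝ, 0 ≤ s → ContinuousAt g1 s := by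
    intro s hs
    exact ((Real.continuous_exp.comp
      (continuous_const.mul continuous_id : Continuous fun u : ℝ => 2 * α * u)).continuousAt).mul
      (((continuous_norm.continuousAt).comp (hρca s hs)).pow 2)
  have hg1int : ∀ u : ℝ, 0 ≤ u → IntervalIntegrable g1 MeasureTheory.volume 0 u := by
    intro u hu
    apply ContinuousOn.intervalIntegrable
    rw [Set.uIcc_of_le hu]
    exact fun s hs => (hg1ca s hs.1).continuousWithinAt
  have hg2int : ∀ u : ℝ, IntervalIntegrable g2 MeasureTheory.volume 0 u :=
    fun u => hg2c.intervalIntegrable 0 u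
  set Φ : ℝ → ℝ := fun u =>
    Real.exp (2 * α * u) * (‖ι (ρ u)‖ ^ 2 + κ * ‖ρ u‖ ^ 2)
      + 2 * β * (∫ s in (0 : ℝ)..u, g1 s) - C * (∫ s in (0 : ℝ)..u, g2 s) with hΦdef
  -- derivative of Φ at interior points
  have hΦderiv : ∀ s ∈ Set.Ioo (0 : ℝ) t, HasDerivAt Φ
      (Real.exp (2 * α * s) *
          (2 * α * (‖ι (ρ s)‖ ^ 2 + κ * ‖ρ s‖ ^ 2)
            + (2 * ⟪ι (ρ' s), ι (ρ s)⟫ + κ * (2 * ⟪ρ' s, ρ s⟫)))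
        + 2 * β * g1 s - C * g2 s) s := by
    intro s hs
    have hs0 : (0 : ℝ) ≤ s := hs.1.le
    -- exponential * energy part
    have hexp : HasDerivAt (fun u : ℝ => Real.exp (2 * α * u))
        (Real.exp (2 * α * s) * (2 * α)) s := by
      have hlin : HasDerivAt (fun u : ℝ => 2 * α * u) (2 * α) s := by
        simpa using (hasDerivAt_id s).const_mul (2 * α)
      exact hlin.exp
    have hn1 : HasDerivAt (fun u => ‖ι (ρ u)‖ ^ 2)
        (2 * ⟪ι (ρ' s), ι (ρ s)⟫) s := by
      have h := (hιρ s hs0).inner ℝ (hιρ s hs0)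
      have hfun : (fun u => ⟪ι (ρ u), ι (ρ u)⟫) = fun u => ‖ι (ρ u)‖ ^ 2 := by
        funext u; rw [real_inner_self_eq_norm_sq]
      rw [hfun] at h
      refine h.congr_deriv ?_
      rw [real_inner_comm]
      ring
    have hn2 : HasDerivAt (fun u => ‖ρ u‖ ^ 2) (2 * ⟪ρ' s, ρ s⟫) s := by
      have h := (hρ s hs0).inner ℝ (hρ s hs0)
      have hfun : (fun u => ⟪ρ u, ρ u⟫) = fun u => ‖ρ u‖ ^ 2 := by
        funext u; rw [real_inner_self_eq_norm_sq]
      rw [hfun] at h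
      refine h.congr_deriv ?_
      rw [real_inner_comm]
      ring
    have hE : HasDerivAt
        (fun u => Real.exp (2 * α * u) * (‖ι (ρ u)‖ ^ 2 + κ * ‖ρ u‖ ^ 2))
        (Real.exp (2 * α * s) *
          (2 * α * (‖ι (ρ s)‖ ^ 2 + κ * ‖ρ s‖ ^ 2)
            + (2 * ⟪ι (ρ' s), ι (ρ s)⟫ + κ * (2 * ⟪ρ' s, ρ s⟫)))) s := by
      have := hexp.mul (hn1.add (hn2.const_mul κ))
      refine this.congr_deriv ?_
      simp only [Pi.add_apply]
      ring
    -- integral parts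
    have hmeas1 : StronglyMeasurableAtFilter g1 (nhds s) MeasureTheory.volume :=
      ContinuousAt.stronglyMeasurableAtFilter isOpen_Ioi
        (fun x hx => hg1ca x (le_of_lt hx)) s hs.1
    have hI1 : HasDerivAt (fun u => ∫ x in (0 : ℝ)..u, g1 x) (g1 s) s :=
      intervalIntegral.integral_hasDerivAt_right (hg1int s hs0) hmeas1 (hg1ca s hs0)
    have hI2 : HasDerivAt (fun u => ∫ x in (0 : ℝ)..u, g2 x) (g2 s) s :=
      intervalIntegral.integral_hasDerivAt_right (hg2int s)
        (hg2c.stronglyMeasurableAtFilter _ _) hg2c.continuousAt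
    exact (hE.add (hI1.const_mul (2 * β))).sub (hI2.const_mul C)
  -- deriv Φ ≤ 0 on the interior
  have hΦnonpos : ∀ s ∈ Set.Ioo (0 : ℝ) t, deriv Φ s ≤ 0 := by
    intro s hs
    rw [(hΦderiv s hs).deriv]
    have hs0 : (0 : ℝ) ≤ s := hs.1.le
    have hexp0 : (0 : ℝ) ≤ Real.exp (2 * α * s) := (Real.exp_pos _).le
    have haux := kv_aux lam1 κ ν α (‖θ s‖) (‖ι (ρ s)‖) (‖ρ s‖)
      (⟪ι (ρ' s), ι (ρ s)⟫ + κ * ⟪ρ' s, ρ s⟫) hlam1 hκ hα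
      (by simpa using hineq s hs0) (hPoincare (ρ s))
    rw [← hCeq, ← hβ] at haux
    have hbr : 2 * α * (‖ι (ρ s)‖ ^ 2 + κ * ‖ρ s‖ ^ 2)
        + (2 * ⟪ι (ρ' s), ι (ρ s)⟫ + κ * (2 * ⟪ρ' s, ρ s⟫))
        + 2 * β * ‖ρ s‖ ^ 2 - C * ‖θ s‖ ^ 2 ≤ 0 := by linarith
    have : Real.exp (2 * α * s) *
        (2 * α * (‖ι (ρ s)‖ ^ 2 + κ * ‖ρ s‖ ^ 2)
          + (2 * ⟪ι (ρ' s), ι (ρ s)⟫ + κ * (2 * ⟪ρ' s, ρ s⟫))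
          + 2 * β * ‖ρ s‖ ^ 2 - C * ‖θ s‖ ^ 2) ≤ 0 :=
      mul_nonpos_of_nonneg_of_nonpos hexp0 hbr
    calc Real.exp (2 * α * s) *
          (2 * α * (‖ι (ρ s)‖ ^ 2 + κ * ‖ρ s‖ ^ 2)
            + (2 * ⟪ι (ρ' s), ι (ρ s)⟫ + κ * (2 * ⟪ρ' s, ρ s⟫)))
          + 2 * β * g1 s - C * g2 s
        = Real.exp (2 * α * s) *
            (2 * α * (‖ι (ρ s)‖ ^ 2 + κ * ‖ρ s‖ ^ 2)
              + (2 * ⟪ι (ρ' s), ι (ρ s)⟫ + κ * (2 * ⟪ρ' s, ρ s⟫))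
              + 2 * β * ‖ρ s‖ ^ 2 - C * ‖θ s‖ ^ 2) := by
          rw [hg1def, hg2def]; ring
      _ ≤ 0 := this
  -- continuity of Φ on [0, t]
  have hΦcont : ContinuousOn Φ (Set.Icc 0 t) := by
    apply ContinuousOn.sub
    · apply ContinuousOn.add
      · intro s hs
        have hs0 : (0 : ℝ) ≤ s := hs.1
        have hcρ : ContinuousAt (fun u => Real.exp (2 * α * u) *
            (‖ι (ρ u)‖ ^ 2 + κ * ‖ρ u‖ ^ 2)) s := by
          apply ContinuousAt.mul
          · exact (Real.continuous_exp.comp (continuous_const.mul continuous_id)).continuousAt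
          · apply ContinuousAt.add
            · exact ((continuous_norm.continuousAt).comp
                ((hιρ s hs0).continuousAt)).pow 2
            · exact continuousAt_const.mul
                (((continuous_norm.continuousAt).comp (hρca s hs0)).pow 2)
        exact hcρ.continuousWithinAt
      · have hprim : ContinuousOn (fun u => ∫ s in (0 : ℝ)..u, g1 s) (Set.Icc 0 t) := by
          have := intervalIntegral.continuousOn_primitive_interval'
            (μ := MeasureTheory.volume) (f := g1) (hg1int t ht)
            (by rw [Set.uIcc_of_le ht]; exact Set.left_mem_Icc.2 ht)
          rwa [Set.uIcc_of_le ht] at this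
        exact continuousOn_const.mul hprim
    · have hprim : ContinuousOn (fun u => ∫ s in (0 : ℝ)..u, g2 s) (Set.Icc 0 t) := by
        have := intervalIntegral.continuousOn_primitive_interval'
          (μ := MeasureTheory.volume) (f := g2) (hg2int t)
          (by rw [Set.uIcc_of_le ht]; exact Set.left_mem_Icc.2 ht)
        rwa [Set.uIcc_of_le ht] at this
      exact continuousOn_const.mul hprim
  -- Φ is antitone on [0, t]
  have hanti : AntitoneOn Φ (Set.Icc 0 t) := by
    apply antitoneOn_of_deriv_nonpos (convex_Icc 0 t) hΦcont
    · intro s hs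
      rw [interior_Icc] at hs
      exact (hΦderiv s hs).differentiableAt.differentiableWithinAt
    · intro s hs
      rw [interior_Icc] at hs
      exact hΦnonpos s hs
  have hΦt : Φ t ≤ Φ 0 :=
    hanti (Set.left_mem_Icc.2 ht) (Set.mem_Icc.2 ⟨ht, le_refl t⟩) ht
  have hΦ0 : Φ 0 = 0 := by
    rw [hΦdef]
    simp [hρ0, intervalIntegral.integral_same]
  rw [hΦ0] at hΦt
  -- rearrange
  rw [hΦdef] at hΦt
  simp only at hΦt
  set I1 : ℝ := ∫ s in (0 : ℝ)..t, g1 s with hI1def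
  set I2 : ℝ := ∫ s in (0 : ℝ)..t, g2 s with hI2def
  have hkey : Real.exp (2 * α * t) * (‖ι (ρ t)‖ ^ 2 + κ * ‖ρ t‖ ^ 2)
      + 2 * β * I1 ≤ C * I2 := by linarith
  have hepos : (0 : ℝ) < Real.exp (-2 * α * t) := Real.exp_pos _
  have hx : Real.exp (-2 * α * t) * Real.exp (2 * α * t) = 1 := by
    rw [← Real.exp_add]
    norm_num
  have h5 := mul_le_mul_of_nonneg_left hkey hepos.le
  have h6 : Real.exp (-2 * α * t) * (Real.exp (2 * α * t)
      * (‖ι (ρ t)‖ ^ 2 + κ * ‖ρ t‖ ^ 2) + 2 * β * I1)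
      = (‖ι (ρ t)‖ ^ 2 + κ * ‖ρ t‖ ^ 2)
        + 2 * β * Real.exp (-2 * α * t) * I1 := by
    rw [mul_add, ← mul_assoc, hx, one_mul]
    ring
  rw [h6] at h5
  calc ‖ι (ρ t)‖ ^ 2 + κ * ‖ρ t‖ ^ 2
        + 2 * β * Real.exp (-2 * α * t) * I1
      ≤ Real.exp (-2 * α * t) * (C * I2) := h5
    _ = C * (Real.exp (-2 * α * t) * I2) := by ring
end
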